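/- If Ω is a nonempty compact totally disconnected metric space, then the function η(ε) counting the number of ε-components of Ω is continuous from the left: lim_{ε ↑ ε₀} η(ε) = η(ε₀) for each ε₀ > 0. -/

import Mathlib

/-- `x` and `y` are joined by an `ε`-chain. -/
def IsEpsChain {Ω : Type*} [MetricSpace Ω] (ε : ℝ) (x y : Ω) : Prop :=
  ∃ (n : ℕ) (c : Fin (n + 1) → Ω), c 0 = x ∧ c (Fin.last n) = y ∧
    ∀ i : Fin n, dist (c i.castSucc) (c i.succ) < ε

/-- The collection of `ε`-components of `Ω`. -/
def epsComponents (Ω : Type*) [MetricSpace Ω] (ε : ℝ) : Set (Set Ω) :=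
  {E | ∃ x, E = {y | IsEpsChain ε x y}}

/-- The chain relation as a reflexive transitive closure. -/
def ChainRel {Ω : Type*} [MetricSpace Ω] (ε : ℝ) : Ω → Ω → Prop :=
  Relation.ReflTransGen (fun a b => dist a b < ε)

lemma chainRel_of_fin {Ω : Type*} [MetricSpace Ω] {ε : ℝ} :
    ∀ (n : ℕ) (c : Fin (n + 1) → Ω),
      (∀ i : Fin n, dist (c i.castSucc) (c i.succ) < ε) →
      ChainRel ε (c 0) (c (Fin.last n)) := by
  intro n
  induction n with
  | zero => intro c _; exact Relation.ReflTransGen.refl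
  | succ n ih =>
    intro c hs
    have IH := ih (c ∘ Fin.castSucc) (fun i => by
      simpa only [Function.comp_apply, Fin.succ_castSucc] using hs i.castSucc)
    have h1 : ChainRel ε (c 0) (c (Fin.castSucc (Fin.last n))) := by
      simpa [Function.comp] using IH
    have h2 : dist (c (Fin.castSucc (Fin.last n))) (c (Fin.last (n + 1))) < ε := by
      simpa [Fin.succ_last] using hs (Fin.last n)
    exact h1.tail h2

lemma isEpsChain_iff {Ω : Type*} [MetricSpace Ω] {ε : ℝ} {x y : Ω} :
    IsEpsChain ε x y ↔ ChainRel ε x y := by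
  constructor
  · rintro ⟨n, c, h0, hl, hs⟩
    subst h0; subst hl
    exact chainRel_of_fin n c hs
  · intro h
    induction h with
    | refl => exact ⟨0, fun _ => x, rfl, rfl, fun i => i.elim0⟩
    | @tail b z hab hbz ih =>
      obtain ⟨n, c, h0, hl, hs⟩ := ih
      refine ⟨n + 1, Fin.snoc c z, ?_, ?_, ?_⟩
      · rw [show (0 : Fin (n + 2)) = Fin.castSucc 0 from rfl, Fin.snoc_castSucc]
        exact h0
      · simp
      · intro i
        refine Fin.lastCases ?_ ?_ i
        · simpa [Fin.succ_last, hl] using hbz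
        · intro j
          simpa only [Fin.succ_castSucc, Fin.snoc_castSucc] using hs j

lemma chainRel_mono {Ω : Type*} [MetricSpace Ω] {ε ε' : ℝ} (h : ε ≤ ε') {x y : Ω}
    (hc : ChainRel ε x y) : ChainRel ε' x y :=
  Relation.ReflTransGen.mono (fun _ _ hd => lt_of_lt_of_le hd h) _ _ hc

lemma chainRel_symm {Ω : Type*} [MetricSpace Ω] {ε : ℝ} {x y : Ω}
    (hc : ChainRel ε x y) : ChainRel ε y x := by
  induction hc with
  | refl => exact Relation.ReflTransGen.refl
  | @tail b z _ hbz ih =>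
    exact Relation.ReflTransGen.trans
      (Relation.ReflTransGen.single (by rwa [dist_comm])) ih

/-- The `ε`-component of `x`, phrased via `ChainRel`. -/
lemma isOpen_chainComp {Ω : Type*} [MetricSpace Ω] {ε : ℝ} (hε : 0 < ε) (x : Ω) :
    IsOpen {y | ChainRel ε x y} := by
  rw [Metric.isOpen_iff]
  intro y hy
  exact ⟨ε, hε, fun z hz => hy.tail (by rw [dist_comm]; exact hz)⟩

lemma isClosed_chainComp {Ω : Type*} [MetricSpace Ω] {ε : ℝ} (hε : 0 < ε) (x : Ω) :
    IsClosed {y | ChainRel ε x y} := by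
  rw [← isOpen_compl_iff, Metric.isOpen_iff]
  intro y hy
  refine ⟨ε, hε, fun z hz hc => hy ?_⟩
  exact hc.tail hz

/-- Any `ε₀`-chain is a `δ`-chain for some `δ < ε₀`. -/
lemma exists_lt_chainRel {Ω : Type*} [MetricSpace Ω] {ε₀ : ℝ} (hε₀ : 0 < ε₀)
    {x y : Ω} (h : ChainRel ε₀ x y) : ∃ δ, δ ∈ Set.Ioo 0 ε₀ ∧ ChainRel δ x y := by
  induction h with
  | refl => exact ⟨ε₀ / 2, ⟨by linarith, by linarith⟩, Relation.ReflTransGen.refl⟩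
  | @tail b z hab hbz ih =>
    obtain ⟨δ, ⟨hδ0, hδε⟩, hR⟩ := ih
    refine ⟨max δ ((dist b z + ε₀) / 2), ⟨lt_max_of_lt_left hδ0,
      max_lt hδε (by linarith)⟩, ?_⟩
    refine (chainRel_mono (le_max_left _ _) hR).tail ?_
    have hd : dist b z < (dist b z + ε₀) / 2 := by linarith
    exact lt_of_lt_of_le hd (le_max_right _ _)

/-- For each basepoint, its `ε₀`-component is a single `δ`-component for some `δ < ε₀`. -/
lemma exists_delta {Ω : Type*} [MetricSpace Ω] [CompactSpace Ω] {ε₀ : ℝ}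
    (hε₀ : 0 < ε₀) (x : Ω) :
    ∃ δ, δ ∈ Set.Ioo 0 ε₀ ∧ ∀ y, ChainRel ε₀ x y → ChainRel δ x y := by
  have hK : IsCompact {y | ChainRel ε₀ x y} :=
    (isClosed_chainComp hε₀ x).isCompact
  have hcov : {y | ChainRel ε₀ x y} ⊆
      ⋃ δ : Set.Ioo (0 : ℝ) ε₀, {y | ChainRel δ.1 x y} := by
    intro y hy
    obtain ⟨δ, hδ, hR⟩ := exists_lt_chainRel hε₀ hy
    exact Set.mem_iUnion.2 ⟨⟨δ, hδ⟩, hR⟩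
  obtain ⟨t, ht⟩ := hK.elim_finite_subcover _
    (fun δ : Set.Ioo (0 : ℝ) ε₀ => isOpen_chainComp δ.2.1 x) hcov
  classical
  have hsne : (insert (ε₀ / 2) (t.image Subtype.val)).Nonempty :=
    ⟨ε₀ / 2, Finset.mem_insert_self _ _⟩
  refine ⟨(insert (ε₀ / 2) (t.image Subtype.val)).max' hsne, ?_, ?_⟩
  · rcases Finset.mem_insert.1 (Finset.max'_mem _ hsne) with h | h
    · rw [h]; exact ⟨by linarith, by linarith⟩
    · obtain ⟨δ, _, hδ⟩ := Finset.mem_image.1 h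
      rw [← hδ]; exact δ.2
  · intro y hy
    obtain ⟨δ, hδt, hδy⟩ := Set.mem_iUnion₂.1 (ht hy)
    have hle : δ.1 ≤ (insert (ε₀ / 2) (t.image Subtype.val)).max' hsne := by
      apply Finset.le_max'
      exact Finset.mem_insert_of_mem (Finset.mem_image_of_mem _ hδt)
    exact chainRel_mono hle hδy

theorem stmt_7 {Ω : Type*} [MetricSpace Ω] [Nonempty Ω] [CompactSpace Ω]
    [TotallyDisconnectedSpace Ω] (ε₀ : ℝ) (hε₀ : 0 < ε₀) :
    Filter.Tendsto (fun ε : ℝ => ((epsComponents Ω ε).ncard : ℝ))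
      (nhdsWithin ε₀ (Set.Iio ε₀)) (nhds ((epsComponents Ω ε₀).ncard : ℝ)) := by
  classical
  -- finitely many basepoints covering Ω by ε₀-components
  have hcov : (Set.univ : Set Ω) ⊆ ⋃ x : Ω, {y | ChainRel ε₀ x y} := by
    intro y _
    exact Set.mem_iUnion.2 ⟨y, Relation.ReflTransGen.refl⟩
  obtain ⟨t, ht⟩ := isCompact_univ.elim_finite_subcover _
    (fun x : Ω => isOpen_chainComp hε₀ x) hcov
  have htne : t.Nonempty := by
    obtain ⟨y⟩ := ‹Nonempty Ω›
    obtain ⟨x, hxt, _⟩ := Set.mem_iUnion₂.1 (ht (Set.mem_univ y))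
    exact ⟨x, hxt⟩
  -- for each basepoint, pick δ
  choose δ hδ hδspec using fun x : Ω => exists_delta (Ω := Ω) hε₀ x
  set ε₁ : ℝ := (t.image δ).max' (htne.image δ) with hε₁def
  have hε₁mem : ε₁ ∈ Set.Ioo 0 ε₀ := by
    have hmem := (t.image δ).max'_mem (htne.image δ)
    obtain ⟨x, _, hx⟩ := Finset.mem_image.1 hmem
    rw [hε₁def, ← hx]; exact hδ x
  -- the chain relation is constant on [ε₁, ε₀)
  have hkey : ∀ ε, ε₁ ≤ ε → ε ≤ ε₀ → ∀ a b : Ω, ChainRel ε a b ↔ ChainRel ε₀ a b := by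
    intro ε hε₁ε hεε₀ a b
    constructor
    · exact chainRel_mono hεε₀
    · intro hab
      obtain ⟨x, hxt, hxa⟩ := Set.mem_iUnion₂.1 (ht (Set.mem_univ a))
      have hxb : ChainRel ε₀ x b := hxa.trans hab
      have hδε : δ x ≤ ε := le_trans (Finset.le_max' _ _ (Finset.mem_image_of_mem δ hxt)) hε₁ε
      have h1 : ChainRel ε x a := chainRel_mono hδε (hδspec x a hxa)
      have h2 : ChainRel ε x b := chainRel_mono hδε (hδspec x b hxb)
      exact (chainRel_symm h1).trans h2
  have heq : ∀ ε, ε₁ ≤ ε → ε ≤ ε₀ → epsComponents Ω ε = epsComponents Ω ε₀ := by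
    intro ε h1 h2
    have hrel : ∀ x : Ω, {y | IsEpsChain ε x y} = {y | IsEpsChain ε₀ x y} := by
      intro x
      ext y
      simp only [Set.mem_setOf_eq, isEpsChain_iff]
      exact hkey ε h1 h2 x y
    unfold epsComponents
    ext E
    simp only [Set.mem_setOf_eq]
    exact exists_congr fun x => by rw [hrel x]
  -- eventual equality gives the limit
  have hev : ∀ᶠ ε in nhdsWithin ε₀ (Set.Iio ε₀),
      ((epsComponents Ω ε).ncard : ℝ) = ((epsComponents Ω ε₀).ncard : ℝ) := by
    have hIoo : Set.Ioo ε₁ ε₀ ∈ nhdsWithin ε₀ (Set.Iio ε₀) :=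
      Ioo_mem_nhdsLT_of_mem ⟨hε₁mem.2, le_refl ε₀⟩
    filter_upwards [hIoo] with ε hε
    rw [heq ε (le_of_lt hε.1) (le_of_lt hε.2)]
  exact Filter.Tendsto.congr' (Filter.EventuallyEq.symm hev) tendsto_const_nhds
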